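/- Let d ≥ 2 be an integer, let ψ ∈ ℂ^d be a unit vector, let A, B ∈ M_d be positive semidefinite matrices, and let p ∈ ℝ. If (1/d)·A + Tr(B)·1_d − (1/d)·B = p·|ψ⟩⟨ψ|, then B = 0, A = p·d·|ψ⟩⟨ψ|, and p ≥ 0. -/

import Mathlib

open Matrix Kronecker BigOperators ComplexOrder

noncomputable section

/-- Entrywise complex conjugate `U̅` of a matrix. -/
def mconj {d : ℕ} (U : Matrix (Fin d) (Fin d) ℂ) : Matrix (Fin d) (Fin d) ℂ :=
  U.map (starRingEnd ℂ)

/-- Rank-one outer product `|v⟩⟨v|`. -/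
def outer {n : Type*} (v : n → ℂ) : Matrix n n ℂ :=
  Matrix.vecMulVec v (star v)

/-- Choi vector `|U⟩⟩ = Σ_i e_i ⊗ U e_i`. -/
def choiVec {d : ℕ} (U : Matrix (Fin d) (Fin d) ℂ) : Fin d × Fin d → ℂ :=
  fun p => U p.2 p.1

/-- `|U⟩⟩⟨⟨U|`. -/
def choiProj {d : ℕ} (U : Matrix (Fin d) (Fin d) ℂ) :
    Matrix (Fin d × Fin d) (Fin d × Fin d) ℂ :=
  outer (choiVec U)

/-- Partial trace over the first tensor factor. -/
def ptrLeft {α β : Type*} [Fintype α] (S : Matrix (α × β) (α × β) ℂ) :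
    Matrix β β ℂ :=
  fun b b' => ∑ a, S (a, b) (a, b')

/-- Partial trace over the second (last) tensor factor. -/
def ptrRight {α β : Type*} [Fintype β] (S : Matrix (α × β) (α × β) ℂ) :
    Matrix α α ℂ :=
  fun a a' => ∑ b, S (a, b) (a', b)

/- ### Auxiliary lemmas -/

lemma aux_trace_conjT_nonneg {d : ℕ} (M : Matrix (Fin d) (Fin d) ℂ) :
    0 ≤ (Mᴴ * M).trace := by
  unfold Matrix.trace
  refine Finset.sum_nonneg fun j _ => ?_
  simp only [Matrix.diag_apply, Matrix.mul_apply, Matrix.conjTranspose_apply]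
  exact Finset.sum_nonneg fun i _ => star_mul_self_nonneg _

lemma aux_psd_trace_mul_proj_nonneg {d : ℕ} {A Q : Matrix (Fin d) (Fin d) ℂ}
    (hA : A.PosSemidef) (hQH : Qᴴ = Q) (hQ2 : Q * Q = Q) : 0 ≤ (A * Q).trace := by
  obtain ⟨C, rfl⟩ : ∃ C : Matrix (Fin d) (Fin d) ℂ, A = Cᴴ * C := by
    open scoped MatrixOrder in
    obtain ⟨C, hC⟩ := CStarAlgebra.nonneg_iff_eq_star_mul_self.mp hA.nonneg
    exact ⟨C, hC⟩
  have key : (Cᴴ * C * Q).trace = ((C * Q)ᴴ * (C * Q)).trace := by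
    rw [Matrix.conjTranspose_mul, hQH]
    have h1 : Cᴴ * C * Q = Cᴴ * C * (Q * Q) := by rw [hQ2]
    rw [h1, show Cᴴ * C * (Q * Q) = (Cᴴ * C * Q) * Q by noncomm_ring,
      Matrix.trace_mul_comm, show Q * (Cᴴ * C * Q) = Q * Cᴴ * (C * Q) by noncomm_ring]
  rw [key]
  exact aux_trace_conjT_nonneg _

lemma aux_psd_trace_nonneg {d : ℕ} {A : Matrix (Fin d) (Fin d) ℂ}
    (hA : A.PosSemidef) : 0 ≤ A.trace := by
  have := aux_psd_trace_mul_proj_nonneg hA (Q := 1) Matrix.conjTranspose_one (one_mul 1)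
  simpa using this

lemma aux_psd_trace_eq_zero {d : ℕ} {B : Matrix (Fin d) (Fin d) ℂ}
    (hB : B.PosSemidef) (h : B.trace = 0) : B = 0 := by
  obtain ⟨C, rfl⟩ : ∃ C : Matrix (Fin d) (Fin d) ℂ, B = Cᴴ * C := by
    open scoped MatrixOrder in
    obtain ⟨C, hC⟩ := CStarAlgebra.nonneg_iff_eq_star_mul_self.mp hB.nonneg
    exact ⟨C, hC⟩
  rw [Matrix.conjTranspose_mul_self_eq_zero]
  have h1 : ∑ j, ∑ i, star (C i j) * C i j = 0 := by
    simpa [Matrix.trace, Matrix.diag, Matrix.mul_apply, Matrix.conjTranspose_apply] using h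
  ext i j
  have h2 := (Finset.sum_eq_zero_iff_of_nonneg
    (fun j _ => Finset.sum_nonneg fun i _ => star_mul_self_nonneg (C i j))).mp h1 j
    (Finset.mem_univ j)
  have h3 := (Finset.sum_eq_zero_iff_of_nonneg
    (fun i _ => star_mul_self_nonneg (C i j))).mp h2 i (Finset.mem_univ i)
  rcases mul_eq_zero.mp h3 with h4 | h4
  · simpa using star_eq_zero.mp h4
  · simpa using h4

lemma aux_three_nonneg {a b c : ℂ} (ha : 0 ≤ a) (hb : 0 ≤ b) (hc : 0 ≤ c)
    (habc : a + b + c = 0) : a = 0 ∧ b = 0 ∧ c = 0 := by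
  have h1 : a + (b + c) = 0 := by linear_combination habc
  have h2 : b + (a + c) = 0 := by linear_combination habc
  have h3 : c + (a + b) = 0 := by linear_combination habc
  refine ⟨le_antisymm ?_ ha, le_antisymm ?_ hb, le_antisymm ?_ hc⟩
  · rw [eq_neg_of_add_eq_zero_left h1]; exact neg_nonpos.mpr (add_nonneg hb hc)
  · rw [eq_neg_of_add_eq_zero_left h2]; exact neg_nonpos.mpr (add_nonneg ha hc)
  · rw [eq_neg_of_add_eq_zero_left h3]; exact neg_nonpos.mpr (add_nonneg ha hb)

/-- **Key matrix identity for the transposition SDP.** If `A, B ≥ 0` and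
`(1/d)·A + Tr(B)·1 − (1/d)·B = p·|ψ⟩⟨ψ|` for a unit vector `ψ`, then `B = 0`,
`A = p·d·|ψ⟩⟨ψ|`, and `p ≥ 0`. -/
theorem transposition_sdp_identity
    (d : ℕ) (hd : 2 ≤ d) (ψ : Fin d → ℂ) (hψ : star ψ ⬝ᵥ ψ = 1)
    (A B : Matrix (Fin d) (Fin d) ℂ) (hA : A.PosSemidef) (hB : B.PosSemidef)
    (p : ℝ)
    (h : ((d : ℂ))⁻¹ • A + B.trace • (1 : Matrix (Fin d) (Fin d) ℂ)
        - ((d : ℂ))⁻¹ • B = (p : ℂ) • outer ψ) :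
    B = 0 ∧ A = ((p : ℂ) * (d : ℂ)) • outer ψ ∧ 0 ≤ p := by
  have hd0 : (d : ℂ) ≠ 0 := by
    exact_mod_cast Nat.cast_ne_zero.mpr (by omega)
  set P : Matrix (Fin d) (Fin d) ℂ := outer ψ with hP
  have hψ' : ∑ k, star (ψ k) * ψ k = 1 := by
    simpa [dotProduct] using hψ
  have hPH : Pᴴ = P := by
    ext i j
    simp [hP, outer, Matrix.vecMulVec_apply, Matrix.conjTranspose_apply, mul_comm]
  have hP2 : P * P = P := by
    ext i j
    simp only [hP, outer, Matrix.mul_apply, Matrix.vecMulVec_apply, Pi.star_apply]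
    have : ∑ k, (ψ i * star (ψ k)) * (ψ k * star (ψ j))
        = (ψ i * star (ψ j)) * ∑ k, star (ψ k) * ψ k := by
      rw [Finset.mul_sum]
      exact Finset.sum_congr rfl fun k _ => by ring
    rw [this, hψ', mul_one]
  have hPtr : P.trace = 1 := by
    have : P.trace = ∑ k, star (ψ k) * ψ k := by
      simp [hP, outer, Matrix.trace, Matrix.diag, Matrix.vecMulVec_apply, mul_comm]
    rw [this, hψ']
  -- trace of h
  have E1 := congrArg Matrix.trace h
  simp only [Matrix.trace_sub, Matrix.trace_add, Matrix.trace_smul, Matrix.trace_one,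
    smul_eq_mul, hPtr, mul_one, Fintype.card_fin] at E1
  -- trace of h * P
  have E2 := congrArg (fun M => (M * P).trace) h
  simp only [Matrix.sub_mul, Matrix.add_mul, Matrix.smul_mul, Matrix.one_mul, hP2,
    Matrix.trace_sub, Matrix.trace_add, Matrix.trace_smul, smul_eq_mul, hPtr] at E2
  set Q : Matrix (Fin d) (Fin d) ℂ := 1 - P with hQ
  have hQH : Qᴴ = Q := by
    rw [hQ, Matrix.conjTranspose_sub, Matrix.conjTranspose_one, hPH]
  have hQ2 : Q * Q = Q := by
    rw [hQ]
    simp only [Matrix.sub_mul, Matrix.mul_sub, Matrix.one_mul, Matrix.mul_one, hP2]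
    abel
  have haQd : (A * Q).trace = A.trace - (A * P).trace := by
    rw [hQ, Matrix.mul_sub, Matrix.mul_one, Matrix.trace_sub]
  have haQ : 0 ≤ (A * Q).trace := aux_psd_trace_mul_proj_nonneg hA hQH hQ2
  have hbP : 0 ≤ (B * P).trace := aux_psd_trace_mul_proj_nonneg hB hPH hP2
  have htB : 0 ≤ B.trace := aux_psd_trace_nonneg hB
  have hcoef : (0:ℂ) ≤ ((d:ℂ)^2 - d - 1) := by
    have hdR : (2:ℝ) ≤ (d:ℝ) := by exact_mod_cast hd
    have : ((d:ℂ)^2 - d - 1) = (((d:ℝ)^2 - (d:ℝ) - 1 : ℝ) : ℂ) := by push_cast; ring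
    rw [this]
    rw [Complex.zero_le_real]
    nlinarith
  have hcoef0 : ((d:ℂ)^2 - d - 1) ≠ 0 := by
    have hdR : (2:ℝ) ≤ (d:ℝ) := by exact_mod_cast hd
    have : ((d:ℂ)^2 - d - 1) = (((d:ℝ)^2 - (d:ℝ) - 1 : ℝ) : ℂ) := by push_cast; ring
    rw [this]
    exact Complex.ofReal_ne_zero.mpr (by nlinarith)
  have KE : (A * Q).trace + ((d:ℂ)^2 - d - 1) * B.trace + (B * P).trace = 0 := by
    rw [haQd]
    field_simp at E1 E2
    linear_combination E1 - E2
  obtain ⟨hz1, hz2, _⟩ := aux_three_nonneg haQ (mul_nonneg hcoef htB) hbP KE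
  have htB0 : B.trace = 0 := by
    rcases mul_eq_zero.mp hz2 with hc | hb
    · exact absurd hc hcoef0
    · exact hb
  have hB0 : B = 0 := aux_psd_trace_eq_zero hB htB0
  rw [hB0] at h
  simp only [Matrix.trace_zero, zero_smul, smul_zero, add_zero, sub_zero] at h
  have hAeq : A = ((p : ℂ) * (d : ℂ)) • P := by
    have hA1 : A = (d:ℂ) • ((d:ℂ)⁻¹ • A) := by
      rw [smul_smul, mul_inv_cancel₀ hd0, one_smul]
    rw [hA1, h, smul_smul, mul_comm]
  refine ⟨hB0, hAeq, ?_⟩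
  have htA : 0 ≤ A.trace := aux_psd_trace_nonneg hA
  rw [hAeq] at htA
  rw [Matrix.trace_smul, smul_eq_mul, hPtr, mul_one] at htA
  have hpd : (0:ℂ) ≤ ((p * (d:ℝ) : ℝ) : ℂ) := by push_cast; exact htA
  rw [Complex.zero_le_real] at hpd
  have hdR : (2:ℝ) ≤ (d:ℝ) := by exact_mod_cast hd
  nlinarith
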